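/- Let k ≥ 2 be an integer and let t be a real number with |t| < 1. Then exp(∑_{i≥1} (−1)^{i−1}·ζ(ik)·tⁱ/i) = 1 + ∑_{i≥1} ζ(k, k, …, k)·tⁱ, where in the i-th term on the right the multiple zeta value has i repeated arguments all equal to k; both series converge absolutely. -/

import Mathlib

open Finset Filter Topology Real

noncomputable def multipleZeta {k : ℕ} (s : Fin k → ℕ) : ℝ :=
  ∑' v : {v : Fin k → ℕ // StrictAnti v ∧ ∀ i, 0 < v i},
    ∏ i : Fin k, (1 : ℝ) / ((v.1 i : ℝ) ^ (s i))

/-- Equiv between ℕ and the index type for length-1 MZVs. -/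
def equivOne : ℕ ≃ {v : Fin 1 → ℕ // StrictAnti v ∧ ∀ i, 0 < v i} where
  toFun n := ⟨fun _ => n + 1, by
    constructor
    · intro a b h
      rw [Subsingleton.elim a b] at h
      exact absurd h (lt_irrefl _)
    · intro i; exact Nat.succ_pos n⟩
  invFun v := v.1 0 - 1
  left_inv n := by simp
  right_inv v := by
    ext i
    have : i = 0 := Subsingleton.elim _ _
    subst this
    have := v.2.2 0
    simp
    omega

lemma mzv_one (m : ℕ) : multipleZeta (fun _ : Fin 1 => m) =
    ∑' n : ℕ, (1 : ℝ) / ((n : ℝ) + 1) ^ m := by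
  rw [multipleZeta, ← equivOne.tsum_eq]
  congr 1
  ext n
  simp [equivOne]

/-- Equiv between finsets of card `j` and strictly decreasing positive `j`-tuples. -/
def equivCard (j : ℕ) :
    {A : Finset ℕ // A.card = j} ≃ {v : Fin j → ℕ // StrictAnti v ∧ ∀ i, 0 < v i} where
  toFun A := ⟨fun i => A.1.orderEmbOfFin A.2 i.rev + 1, by
    constructor
    · intro a b hab
      show A.1.orderEmbOfFin A.2 b.rev + 1 < A.1.orderEmbOfFin A.2 a.rev + 1
      have : b.rev < a.rev := by rwa [Fin.rev_lt_rev]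
      have := (A.1.orderEmbOfFin A.2).strictMono this
      omega
    · intro i; exact Nat.succ_pos _⟩
  invFun v := ⟨Finset.image (fun i => v.1 i - 1) Finset.univ, by
    rw [Finset.card_image_of_injective _ ?_, Finset.card_univ, Fintype.card_fin]
    intro a b hab
    have hab' : v.1 a - 1 = v.1 b - 1 := hab
    have ha := v.2.2 a
    have hb := v.2.2 b
    exact v.2.1.injective (by omega)⟩
  left_inv A := by
    ext n
    simp only [Finset.mem_image, Finset.mem_univ, true_and, Nat.add_sub_cancel]
    constructor
    · rintro ⟨i, rfl⟩
      exact Finset.orderEmbOfFin_mem _ _ _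
    · intro hn
      have : n ∈ Set.range (A.1.orderEmbOfFin A.2) := by
        rw [Finset.range_orderEmbOfFin]; exact hn
      obtain ⟨i, hi⟩ := this
      exact ⟨i.rev, by rw [Fin.rev_rev]; exact hi⟩
  right_inv v := by
    ext i
    show _ + 1 = v.1 i
    have hmono : StrictMono (fun i : Fin j => v.1 i.rev - 1) := by
      intro a b hab
      show v.1 a.rev - 1 < v.1 b.rev - 1
      have : b.rev < a.rev := by rwa [Fin.rev_lt_rev]
      have h2 := v.2.1 this
      have := v.2.2 a.rev
      omega
    have hmem : ∀ x : Fin j, v.1 x.rev - 1 ∈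
        Finset.image (fun i => v.1 i - 1) Finset.univ :=
      fun x => Finset.mem_image_of_mem _ (Finset.mem_univ _)
    suffices h : ∀ (hc : (Finset.image (fun i => v.1 i - 1) Finset.univ).card = j),
        (Finset.image (fun i => v.1 i - 1) Finset.univ).orderEmbOfFin hc i.rev + 1 = v.1 i by
      exact h _
    intro hc
    have h3 := congrFun (Finset.orderEmbOfFin_unique hc hmem hmono).symm i.rev
    rw [Fin.rev_rev] at h3
    have := v.2.2 i
    omega

lemma mzv_rep (k j : ℕ) : multipleZeta (fun _ : Fin j => k) =
    ∑' A : {A : Finset ℕ // A.card = j}, ∏ n ∈ A.1, (1 : ℝ) / ((n : ℝ) + 1) ^ k := by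
  rw [multipleZeta, ← (equivCard j).tsum_eq]
  congr 1
  ext A
  simp only [equivCard, Equiv.coe_fn_mk]
  have himg : Finset.image (⇑(A.1.orderEmbOfFin A.2)) Finset.univ = A.1 := by
    apply Finset.coe_injective
    rw [Finset.coe_image, Finset.coe_univ, Set.image_univ, Finset.range_orderEmbOfFin]
  conv_rhs => rw [← himg]
  rw [Finset.prod_image (fun a _ b _ hab => (A.1.orderEmbOfFin A.2).injective hab)]
  refine Fintype.prod_equiv Fin.revPerm _ _ (fun x => ?_)
  simp only [Fin.revPerm_apply]
  push_cast
  ring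

lemma x_summable {k : ℕ} (hk : 2 ≤ k) :
    Summable (fun n : ℕ => (1 : ℝ) / ((n : ℝ) + 1) ^ k) := by
  have h := summable_one_div_nat_pow.mpr (by omega : 1 < k)
  have h2 := (summable_nat_add_iff 1).mpr h
  refine h2.congr fun n => ?_
  push_cast
  ring

lemma prod_one_add (t : ℝ) (x : ℕ → ℝ) (N : ℕ) :
    ∏ n ∈ Finset.range N, (1 + t * x n)
      = ∑ A ∈ (Finset.range N).powerset, t ^ A.card * ∏ n ∈ A, x n := by
  have h : ∀ n ∈ Finset.range N, 1 + t * x n = t * x n + 1 := fun n _ => by ring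
  rw [Finset.prod_congr rfl h, Finset.prod_add]
  refine Finset.sum_congr rfl fun A hA => ?_
  rw [Finset.prod_const_one, mul_one, Finset.prod_mul_distrib, Finset.prod_const]

lemma summable_finsets {t : ℝ} {x : ℕ → ℝ} (hx0 : ∀ n, 0 ≤ x n) (hxs : Summable x) :
    Summable (fun A : Finset ℕ => t ^ A.card * ∏ n ∈ A, x n) := by
  have habs : ∀ A : Finset ℕ, |t ^ A.card * ∏ n ∈ A, x n| = |t| ^ A.card * ∏ n ∈ A, x n := by
    intro A
    rw [abs_mul, abs_pow, abs_of_nonneg (Finset.prod_nonneg fun n _ => hx0 n)]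
  apply Summable.of_abs
  refine summable_of_sum_le (c := Real.exp (|t| * ∑' n, x n)) (fun A => abs_nonneg _) fun u => ?_
  set N := (u.sup fun A => A.sup id) + 1 with hN
  have hsub : u ⊆ (Finset.range N).powerset := by
    intro A hA
    rw [Finset.mem_powerset]
    intro a ha
    rw [Finset.mem_range]
    calc a = id a := rfl
    _ ≤ A.sup id := Finset.le_sup ha
    _ ≤ u.sup (fun A => A.sup id) := Finset.le_sup hA
    _ < N := Nat.lt_succ_self _
  calc ∑ A ∈ u, |t ^ A.card * ∏ n ∈ A, x n|
      = ∑ A ∈ u, |t| ^ A.card * ∏ n ∈ A, x n := Finset.sum_congr rfl fun A _ => habs A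
    _ ≤ ∑ A ∈ (Finset.range N).powerset, |t| ^ A.card * ∏ n ∈ A, x n :=
        Finset.sum_le_sum_of_subset_of_nonneg hsub fun A _ _ =>
          mul_nonneg (pow_nonneg (abs_nonneg t) _) (Finset.prod_nonneg fun n _ => hx0 n)
    _ = ∏ n ∈ Finset.range N, (1 + |t| * x n) := (prod_one_add |t| x N).symm
    _ ≤ ∏ n ∈ Finset.range N, Real.exp (|t| * x n) := by
        refine Finset.prod_le_prod (fun n _ => ?_) (fun n _ => ?_)
        · have := hx0 n
          positivity
        · linarith [Real.add_one_le_exp (|t| * x n)]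
    _ = Real.exp (∑ n ∈ Finset.range N, |t| * x n) := (Real.exp_sum _ _).symm
    _ ≤ Real.exp (|t| * ∑' n, x n) := by
        apply Real.exp_le_exp.mpr
        rw [← Finset.mul_sum]
        exact mul_le_mul_of_nonneg_left (Summable.sum_le_tsum _ (fun n _ => hx0 n) hxs) (abs_nonneg t)

lemma tendsto_powerset_range :
    Tendsto (fun N => (Finset.range N).powerset) atTop (atTop : Filter (Finset (Finset ℕ))) := by
  apply tendsto_atTop_finset_of_monotone
  · intro a b hab
    exact Finset.powerset_mono.mpr (Finset.range_subset_range.mpr hab)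
  · intro A
    exact ⟨A.sup id + 1, Finset.mem_powerset.mpr fun a ha =>
      Finset.mem_range.mpr (Nat.lt_succ_of_le (Finset.le_sup (f := id) ha))⟩

/-- The sigma equiv grouping finsets by cardinality. -/
def esig : (Σ j : ℕ, {A : Finset ℕ // A.card = j}) ≃ Finset ℕ where
  toFun p := p.2.1
  invFun A := ⟨A.card, A, rfl⟩
  left_inv := by rintro ⟨j, A, rfl⟩; rfl
  right_inv A := rfl

lemma mzv_zero (k : ℕ) : multipleZeta (fun _ : Fin 0 => k) = 1 := by
  rw [mzv_rep k 0]
  rw [tsum_eq_single (⟨∅, Finset.card_empty⟩ : {A : Finset ℕ // A.card = 0})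
    (fun b hb => absurd (Subtype.ext (Finset.card_eq_zero.mp b.2)) hb)]
  simp

set_option maxHeartbeats 1000000 in
theorem exp_zeta_series_eq_repeated_mzv_series
    (k : ℕ) (hk : 2 ≤ k) (t : ℝ) (ht : |t| < 1) :
    Summable (fun i : ℕ =>
      (-1 : ℝ) ^ i * multipleZeta (fun _ : Fin 1 => (i + 1) * k) * t ^ (i + 1) / ((i : ℝ) + 1)) ∧
    Summable (fun i : ℕ => multipleZeta (fun _ : Fin (i + 1) => k) * t ^ (i + 1)) ∧
    Real.exp (∑' i : ℕ,
        (-1 : ℝ) ^ i * multipleZeta (fun _ : Fin 1 => (i + 1) * k) * t ^ (i + 1) / ((i : ℝ) + 1)) =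
      1 + ∑' i : ℕ, multipleZeta (fun _ : Fin (i + 1) => k) * t ^ (i + 1) := by
  set x : ℕ → ℝ := fun n => (1 : ℝ) / ((n : ℝ) + 1) ^ k with hxdef
  have hx0 : ∀ n, 0 < x n := fun n => by positivity
  have hx0' : ∀ n, 0 ≤ x n := fun n => (hx0 n).le
  have hx1 : ∀ n, x n ≤ 1 := by
    intro n
    rw [hxdef]
    rw [div_le_one (by positivity)]
    exact one_le_pow₀ (by linarith [Nat.cast_nonneg (α := ℝ) n])
  have hxs : Summable x := x_summable hk
  set Cx : ℝ := ∑' n, x n with hCx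
  have hCx0 : 0 ≤ Cx := tsum_nonneg hx0'
  have hxpowle : ∀ (i : ℕ) (n : ℕ), x n ^ (i + 1) ≤ x n :=
    fun i n => pow_le_of_le_one (hx0' n) (hx1 n) (Nat.succ_ne_zero i)
  have hxpow : ∀ i : ℕ, Summable (fun n => x n ^ (i + 1)) := fun i =>
    hxs.of_nonneg_of_le (fun n => pow_nonneg (hx0' n) _) (hxpowle i)
  set Z : ℕ → ℝ := fun i => ∑' n, x n ^ (i + 1) with hZdef
  have hZ0 : ∀ i, 0 ≤ Z i := fun i => tsum_nonneg fun n => pow_nonneg (hx0' n) _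
  have hZle : ∀ i, Z i ≤ Cx := fun i => Summable.tsum_le_tsum (hxpowle i) (hxpow i) hxs
  -- the single zeta values
  have hmzv1 : ∀ i : ℕ, multipleZeta (fun _ : Fin 1 => (i + 1) * k) = Z i := by
    intro i
    rw [mzv_one]
    refine tsum_congr fun n => ?_
    rw [show ((i + 1) * k) = k * (i + 1) from mul_comm _ _, pow_mul, ← one_div_pow]
  -- summability of the log series
  set a : ℕ → ℝ := fun i =>
    (-1 : ℝ) ^ i * multipleZeta (fun _ : Fin 1 => (i + 1) * k) * t ^ (i + 1) / ((i : ℝ) + 1)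
    with hadef
  have hip : ∀ i : ℕ, (0 : ℝ) < (i : ℝ) + 1 := fun i => by positivity
  have habound : ∀ i : ℕ, |a i| ≤ Cx * |t| ^ (i + 1) := by
    intro i
    simp only [hadef]
    rw [hmzv1 i]
    have h1 : |(-1 : ℝ) ^ i * Z i * t ^ (i + 1) / ((i : ℝ) + 1)|
        = Z i * |t| ^ (i + 1) / ((i : ℝ) + 1) := by
      rw [abs_div, abs_mul, abs_mul, abs_pow, abs_pow, abs_neg, abs_one, one_pow, one_mul,
        abs_of_nonneg (hZ0 i), abs_of_nonneg (hip i).le]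
    rw [h1]
    have h2 : Z i * |t| ^ (i + 1) / ((i : ℝ) + 1) ≤ Z i * |t| ^ (i + 1) := by
      rw [div_le_iff₀ (hip i)]
      have : (1 : ℝ) ≤ (i : ℝ) + 1 := by linarith [Nat.cast_nonneg (α := ℝ) i]
      nlinarith [mul_nonneg (hZ0 i) (pow_nonneg (abs_nonneg t) (i + 1))]
    exact h2.trans (mul_le_mul_of_nonneg_right (hZle i) (pow_nonneg (abs_nonneg t) _))
  have hgeo : Summable (fun i : ℕ => Cx * |t| ^ (i + 1)) := by
    have := (summable_geometric_of_lt_one (abs_nonneg t) ht).mul_left (Cx * |t|)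
    refine this.congr fun i => ?_
    ring
  have hS1 : Summable a := by
    refine Summable.of_norm_bounded hgeo fun i => ?_
    exact habound i
  -- positivity of the factors
  have hfac : ∀ n, 0 < 1 + t * x n := by
    intro n
    have h1 : |t * x n| ≤ |t| := by
      rw [abs_mul, abs_of_nonneg (hx0' n)]
      calc |t| * x n ≤ |t| * 1 := mul_le_mul_of_nonneg_left (hx1 n) (abs_nonneg t)
      _ = |t| := mul_one _
    have := neg_abs_le (t * x n)
    have h2 : |t * x n| < 1 := lt_of_le_of_lt h1 ht
    linarith
  -- log series of each factor
  have hlog : ∀ n, HasSum (fun i : ℕ => (-1 : ℝ) ^ i * (t * x n) ^ (i + 1) / ((i : ℝ) + 1))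
      (Real.log (1 + t * x n)) := by
    intro n
    have habs : |(-(t * x n))| < 1 := by
      rw [abs_neg, abs_mul, abs_of_nonneg (hx0' n)]
      calc |t| * x n ≤ |t| * 1 := mul_le_mul_of_nonneg_left (hx1 n) (abs_nonneg t)
      _ = |t| := mul_one _
      _ < 1 := ht
    have h := (hasSum_pow_div_log_of_abs_lt_one habs).neg
    rw [neg_neg, sub_neg_eq_add] at h
    refine h.congr_fun fun i => ?_
    rw [neg_pow, pow_succ]
    ring
  -- partial products
  set P : ℕ → ℝ := fun N => ∏ n ∈ Finset.range N, (1 + t * x n) with hPdef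
  have hPpos : ∀ N, 0 < P N := fun N => Finset.prod_pos fun n _ => hfac n
  have hlogP : ∀ N, Real.log (P N) = ∑' i : ℕ,
      (-1 : ℝ) ^ i * t ^ (i + 1) / ((i : ℝ) + 1) * ∑ n ∈ Finset.range N, x n ^ (i + 1) := by
    intro N
    rw [hPdef]
    rw [Real.log_prod (fun n _ => (hfac n).ne')]
    rw [Finset.sum_congr rfl (fun n _ => ((hlog n).tsum_eq).symm)]
    rw [← Summable.tsum_finsetSum (fun n _ => (hlog n).summable)]
    refine tsum_congr fun i => ?_
    rw [Finset.mul_sum]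
    refine Finset.sum_congr rfl fun n _ => ?_
    rw [mul_pow]
    ring
  -- the limit of log (P N)
  set S : ℝ := ∑' i, a i with hSdef
  have haZ : ∀ i : ℕ, a i = (-1 : ℝ) ^ i * t ^ (i + 1) / ((i : ℝ) + 1) * Z i := by
    intro i
    simp only [hadef]
    rw [hmzv1 i]
    ring
  have hlogTend : Tendsto (fun N => Real.log (P N)) atTop (𝓝 S) := by
    have hdom : Tendsto (fun N => ∑' i : ℕ,
        (-1 : ℝ) ^ i * t ^ (i + 1) / ((i : ℝ) + 1) * ∑ n ∈ Finset.range N, x n ^ (i + 1))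
        atTop (𝓝 (∑' i : ℕ, (-1 : ℝ) ^ i * t ^ (i + 1) / ((i : ℝ) + 1) * Z i)) := by
      refine tendsto_tsum_of_dominated_convergence hgeo (fun i => ?_) ?_
      · exact ((hxpow i).hasSum.tendsto_sum_nat).const_mul _
      · filter_upwards with N i
        have hsum0 : 0 ≤ ∑ n ∈ Finset.range N, x n ^ (i + 1) :=
          Finset.sum_nonneg fun n _ => pow_nonneg (hx0' n) _
        have hsumle : ∑ n ∈ Finset.range N, x n ^ (i + 1) ≤ Z i :=
          Summable.sum_le_tsum _ (fun n _ => pow_nonneg (hx0' n) _) (hxpow i)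
        have h1 : ‖(-1 : ℝ) ^ i * t ^ (i + 1) / ((i : ℝ) + 1)
            * ∑ n ∈ Finset.range N, x n ^ (i + 1)‖
            = |t| ^ (i + 1) / ((i : ℝ) + 1) * ∑ n ∈ Finset.range N, x n ^ (i + 1) := by
          rw [Real.norm_eq_abs, abs_mul, abs_div, abs_mul, abs_pow, abs_pow, abs_neg, abs_one,
            one_pow, one_mul, abs_of_nonneg (hip i).le, abs_of_nonneg hsum0]
        rw [h1]
        have h2 : |t| ^ (i + 1) / ((i : ℝ) + 1) ≤ |t| ^ (i + 1) := by
          rw [div_le_iff₀ (hip i)]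
          have : (1 : ℝ) ≤ (i : ℝ) + 1 := by linarith [Nat.cast_nonneg (α := ℝ) i]
          nlinarith [pow_nonneg (abs_nonneg t) (i + 1)]
        calc |t| ^ (i + 1) / ((i : ℝ) + 1) * ∑ n ∈ Finset.range N, x n ^ (i + 1)
            ≤ |t| ^ (i + 1) * Z i := by
              refine mul_le_mul h2 hsumle hsum0 (pow_nonneg (abs_nonneg t) _)
          _ ≤ Cx * |t| ^ (i + 1) := by
              rw [mul_comm]
              exact mul_le_mul_of_nonneg_right (hZle i) (pow_nonneg (abs_nonneg t) _)
    have hSeq : S = ∑' i : ℕ, (-1 : ℝ) ^ i * t ^ (i + 1) / ((i : ℝ) + 1) * Z i := by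
      rw [hSdef]
      exact tsum_congr haZ
    rw [hSeq]
    refine hdom.congr fun N => (hlogP N).symm
  have hPexp : Tendsto P atTop (𝓝 (Real.exp S)) := by
    have h := (Real.continuous_exp.tendsto S).comp hlogTend
    refine h.congr fun N => ?_
    exact Real.exp_log (hPpos N)
  -- the finset sum side
  set f : Finset ℕ → ℝ := fun A => t ^ A.card * ∏ n ∈ A, x n with hfdef
  have hfs : Summable f := summable_finsets hx0' hxs
  set T : ℝ := ∑' A, f A with hTdef
  have hPT : Tendsto P atTop (𝓝 T) := by
    have h1 := hfs.hasSum.comp tendsto_powerset_range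
    refine h1.congr fun N => ?_
    exact (prod_one_add t x N).symm
  have hexpST : Real.exp S = T := tendsto_nhds_unique hPexp hPT
  -- group T by cardinality
  have hsig : Summable (fun p : Σ j : ℕ, {A : Finset ℕ // A.card = j} => f (esig p)) :=
    esig.summable_iff.mpr hfs
  have hfiber : ∀ j : ℕ, ∑' A : {A : Finset ℕ // A.card = j}, f (esig ⟨j, A⟩)
      = multipleZeta (fun _ : Fin j => k) * t ^ j := by
    intro j
    have h1 : ∀ A : {A : Finset ℕ // A.card = j},
        f (esig ⟨j, A⟩) = t ^ j * ∏ n ∈ A.1, x n := by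
      intro A
      simp only [hfdef, esig, Equiv.coe_fn_mk, A.2]
    rw [tsum_congr h1, tsum_mul_left, mzv_rep, mul_comm]
  have hTgroup : T = ∑' j : ℕ, multipleZeta (fun _ : Fin j => k) * t ^ j := by
    rw [hTdef, ← esig.tsum_eq f, Summable.tsum_sigma hsig]
    exact tsum_congr hfiber
  have hcsum : Summable (fun j : ℕ => multipleZeta (fun _ : Fin j => k) * t ^ j) := by
    have := hsig.sigma
    refine this.congr fun j => ?_
    exact hfiber j
  have hS2 : Summable (fun i : ℕ => multipleZeta (fun _ : Fin (i + 1) => k) * t ^ (i + 1)) :=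
    (summable_nat_add_iff 1).mpr hcsum
  refine ⟨hS1, hS2, ?_⟩
  rw [hexpST, hTgroup, Summable.tsum_eq_zero_add hcsum]
  rw [mzv_zero, pow_zero, mul_one]
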